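/- Let C(t) ∈ ℝ^{n×p} for t = 0,…,N−1, let D ∈ ℝ^{p×p} be diagonal, and let ξ(0) ∈ ℝ^p have all components nonzero, with ξ(t) = D^t ξ(0). Define F(t) = 𝟙_pᵀ ⊗ C(t), Λ = D ⊗ I_p, Q ∈ ℝ^{Nn×p²} with block rows ξ(t)ᵀ ⊗ C(t), and W ∈ ℝ^{Nn×p²} with block rows F(t) Λ^t. Then Q has full column rank if and only if W has full column rank. -/

import Mathlib

open Matrix Kronecker

lemma lam_pow_aux11 (p : ℕ) (d : Fin p → ℝ) (t : ℕ) :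
    (Matrix.diagonal d ⊗ₖ (1 : Matrix (Fin p) (Fin p) ℝ)) ^ t
      = Matrix.diagonal (fun jk : Fin p × Fin p => d jk.1 ^ t) := by
  rw [← Matrix.diagonal_one, Matrix.diagonal_kronecker_diagonal, Matrix.diagonal_pow]
  simp

lemma key_aux11 (n p : ℕ) (Ct : Matrix (Fin n) (Fin p) ℝ) (d ξ0 : Fin p → ℝ) (t : ℕ)
    (v : Fin p × Fin p → ℝ) :
    ((Matrix.of fun (_ : Fin 1) j => ((Matrix.diagonal d) ^ t).mulVec ξ0 j) ⊗ₖ Ct).mulVec v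
    = (((Matrix.of fun (_ : Fin 1) (_ : Fin p) => (1 : ℝ)) ⊗ₖ Ct) *
        (Matrix.diagonal d ⊗ₖ (1 : Matrix (Fin p) (Fin p) ℝ)) ^ t).mulVec
        (fun jk => ξ0 jk.1 * v jk) := by
  rw [lam_pow_aux11, ← Matrix.mulVec_mulVec]
  funext x
  simp [Matrix.mulVec, dotProduct, Matrix.kroneckerMap_apply,
    Fintype.sum_prod_type, Matrix.diagonal_pow, Matrix.mulVec_diagonal,
    Matrix.diagonal_apply, Finset.mul_sum]
  congr 1; funext j; congr 1; funext k; ring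

/-- With ξ(t) = D^t ξ(0) (D diagonal, all entries of ξ(0) nonzero), the matrix Q with block
rows ξ(t)ᵀ ⊗ C(t) has full column rank iff the matrix W with block rows
(𝟙_pᵀ ⊗ C(t)) Λ^t, Λ = D ⊗ I_p, has full column rank. -/
theorem stmt11 (n p N : ℕ) (C : Fin N → Matrix (Fin n) (Fin p) ℝ)
    (d : Fin p → ℝ) (ξ0 : Fin p → ℝ) (hξ0 : ∀ i, ξ0 i ≠ 0)
    (ξ : Fin N → Fin p → ℝ)
    (hξ : ∀ t : Fin N, ξ t = ((Matrix.diagonal d) ^ (t : ℕ)).mulVec ξ0) :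
    (∀ v : Fin p × Fin p → ℝ,
        (∀ t : Fin N,
          ((Matrix.of fun (_ : Fin 1) j => ξ t j) ⊗ₖ C t).mulVec v = 0) → v = 0) ↔
      (∀ v : Fin p × Fin p → ℝ,
        (∀ t : Fin N,
          (((Matrix.of fun (_ : Fin 1) (_ : Fin p) => (1 : ℝ)) ⊗ₖ C t) *
            (Matrix.diagonal d ⊗ₖ (1 : Matrix (Fin p) (Fin p) ℝ)) ^ (t : ℕ)).mulVec v = 0)
          → v = 0) := by
  have hQ : ∀ (t : Fin N) (v : Fin p × Fin p → ℝ),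
      ((Matrix.of fun (_ : Fin 1) j => ξ t j) ⊗ₖ C t).mulVec v
      = (((Matrix.of fun (_ : Fin 1) (_ : Fin p) => (1 : ℝ)) ⊗ₖ C t) *
          (Matrix.diagonal d ⊗ₖ (1 : Matrix (Fin p) (Fin p) ℝ)) ^ (t : ℕ)).mulVec
          (fun jk => ξ0 jk.1 * v jk) := by
    intro t v
    rw [hξ t]
    exact key_aux11 n p (C t) d ξ0 t v
  constructor
  · intro h v hv
    have hu := h (fun jk => (ξ0 jk.1)⁻¹ * v jk) ?_
    · funext jk
      have := congrFun hu jk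
      simp only [Pi.zero_apply] at this ⊢
      field_simp at this
      exact (div_eq_zero_iff.mp this).resolve_right (hξ0 jk.1)
    · intro t
      rw [hQ]
      have : (fun jk : Fin p × Fin p => ξ0 jk.1 * ((ξ0 jk.1)⁻¹ * v jk)) = v := by
        funext jk; exact mul_inv_cancel_left₀ (hξ0 jk.1) _
      rw [this]
      exact hv t
  · intro h v hv
    have hu := h (fun jk => ξ0 jk.1 * v jk) (fun t => (hQ t v) ▸ hv t)
    funext jk
    have := congrFun hu jk
    simp only [Pi.zero_apply, mul_eq_zero] at this
    exact this.resolve_left (hξ0 jk.1)
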